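/- Let C be a two-dimensional elasticity tensor with C₁₁₁₂ ≠ 0 such that the rotation Rot(π/2) is a symmetry transformation of C. Then there exists α ∈ (0, π/4) such that (C₁₁₁₁ − C₁₁₂₂ − 2C₁₂₁₂)/C₁₁₁₂ = 2(cot(2α) − tan(2α)); moreover, for every such α, the reflection Ref(α) is a symmetry transformation of C. -/

import Mathlib

open Matrix Real

/-- Counterclockwise rotation by angle `θ`. -/
noncomputable def Rot (θ : ℝ) : Matrix (Fin 2) (Fin 2) ℝ :=
  !![Real.cos θ, -Real.sin θ; Real.sin θ, Real.cos θ]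

/-- Reflection about the line through the origin making angle `θ` with the x-axis. -/
noncomputable def Ref (θ : ℝ) : Matrix (Fin 2) (Fin 2) ℝ :=
  !![Real.cos (2*θ), Real.sin (2*θ); Real.sin (2*θ), -Real.cos (2*θ)]

/-- A two-dimensional elasticity tensor: minor and major symmetries. -/
def IsElast2 (C : Fin 2 → Fin 2 → Fin 2 → Fin 2 → ℝ) : Prop :=
  (∀ i j k l, C i j k l = C j i k l) ∧
  (∀ i j k l, C i j k l = C i j l k) ∧
  (∀ i j k l, C i j k l = C k l i j)

/-- `Q` is a symmetry transformation of the tensor `C`. -/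
def IsSymTrans (C : Fin 2 → Fin 2 → Fin 2 → Fin 2 → ℝ)
    (Q : Matrix (Fin 2) (Fin 2) ℝ) : Prop :=
  ∀ i j k l, C i j k l =
    ∑ p, ∑ q, ∑ r, ∑ s, Q i p * Q j q * Q k r * Q l s * C p q r s

set_option maxHeartbeats 2000000 in
/-- Case 2 in the classification: a tensor with `C₁₁₁₂ ≠ 0`
invariant under `Rot (π/2)` admits a reflection symmetry `Ref α` with
`α ∈ (0, π/4)`. -/
theorem statement8 (C : Fin 2 → Fin 2 → Fin 2 → Fin 2 → ℝ) (hC : IsElast2 C)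
    (hne : C 0 0 0 1 ≠ 0) (hrot : IsSymTrans C (Rot (π/2))) :
    (∃ α ∈ Set.Ioo (0:ℝ) (π/4),
      (C 0 0 0 0 - C 0 0 1 1 - 2 * C 0 1 0 1) / C 0 0 0 1
        = 2 * (Real.cot (2*α) - Real.tan (2*α))) ∧
    (∀ α ∈ Set.Ioo (0:ℝ) (π/4),
      (C 0 0 0 0 - C 0 0 1 1 - 2 * C 0 1 0 1) / C 0 0 0 1
        = 2 * (Real.cot (2*α) - Real.tan (2*α)) →
      IsSymTrans C (Ref α)) := by
  obtain ⟨hm1, hm2, hmaj⟩ := hC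
  -- consequences of the rotation symmetry
  have hr0 := hrot 0 0 0 0
  have hr1 := hrot 1 0 0 0
  simp only [Rot, Real.cos_pi_div_two, Real.sin_pi_div_two, Fin.sum_univ_two,
    Matrix.of_apply, Matrix.cons_val', Matrix.cons_val_zero, Matrix.cons_val_one, Matrix.head_cons,
    Matrix.empty_val', Matrix.cons_val_fin_one, Matrix.head_fin_const, Fin.isValue,
    mul_zero, zero_mul, mul_one, one_mul, add_zero, zero_add, neg_mul, mul_neg,
    neg_neg, neg_zero] at hr0 hr1
  -- component identities
  have h0010 : C 0 0 1 0 = C 0 0 0 1 := hm2 0 0 1 0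
  have h1000 : C 1 0 0 0 = C 0 0 0 1 := (hmaj 1 0 0 0).trans h0010
  have h0100 : C 0 1 0 0 = C 0 0 0 1 := (hm1 0 1 0 0).trans h1000
  have h0110 : C 0 1 1 0 = C 0 1 0 1 := hm2 0 1 1 0
  have h1001 : C 1 0 0 1 = C 0 1 0 1 := hm1 1 0 0 1
  have h1010 : C 1 0 1 0 = C 0 1 0 1 := (hm1 1 0 1 0).trans h0110
  have h1100 : C 1 1 0 0 = C 0 0 1 1 := hmaj 1 1 0 0
  have h1111 : C 1 1 1 1 = C 0 0 0 0 := by linarith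
  have h0111 : C 0 1 1 1 = -C 0 0 0 1 := by linarith
  have h1011 : C 1 0 1 1 = -C 0 0 0 1 := (hm1 1 0 1 1).trans h0111
  have h1101 : C 1 1 0 1 = -C 0 0 0 1 := (hmaj 1 1 0 1).trans h0111
  have h1110 : C 1 1 1 0 = -C 0 0 0 1 := (hm2 1 1 1 0).trans h1101
  constructor
  · -- existence of α
    set r := (C 0 0 0 0 - C 0 0 1 1 - 2 * C 0 1 0 1) / C 0 0 0 1 with hrdef
    set s := Real.sqrt (1 + r ^ 2 / 16) with hsdef
    have hs : s ^ 2 = 1 + r ^ 2 / 16 := Real.sq_sqrt (by positivity)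
    have hsnn : 0 ≤ s := Real.sqrt_nonneg _
    set t := s - r / 4 with htdef
    have ht : 0 < t := by
      rcases le_or_gt r 0 with hr' | hr'
      · have h1 : 1 ≤ s := by nlinarith [hs, hsnn]
        rw [htdef]; linarith
      · have h1 : r / 4 < s := by nlinarith [hs, hsnn]
        rw [htdef]; linarith
    have harc : 0 < Real.arctan t := by
      rw [← Real.arctan_zero]; exact Real.arctan_strictMono ht
    refine ⟨Real.arctan t / 2, ⟨by linarith, by linarith [Real.arctan_lt_pi_div_two t]⟩, ?_⟩
    have h2 : 2 * (Real.arctan t / 2) = Real.arctan t := by ring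
    rw [h2, Real.tan_arctan, Real.cot_eq_cos_div_sin, Real.cos_arctan, Real.sin_arctan]
    have hsq : (0:ℝ) < Real.sqrt (1 + t ^ 2) := by positivity
    have key : 1 - t ^ 2 = (r / 2) * t := by rw [htdef]; linear_combination -hs
    have hX : Real.sqrt (1 + t ^ 2) ≠ 0 := ne_of_gt hsq
    have hred : 1 / Real.sqrt (1 + t ^ 2) / (t / Real.sqrt (1 + t ^ 2)) = 1 / t := by
      field_simp
    rw [hred]
    have ht' : t ≠ 0 := ne_of_gt ht
    have hmt : (1 / t - t) * t = 1 - t ^ 2 := by field_simp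
    apply mul_right_cancel₀ ht'
    rw [show (2 * (1 / t - t)) * t = 2 * ((1 / t - t) * t) by ring, hmt]
    linear_combination (-2 : ℝ) * key
  · -- every such α gives a reflection symmetry
    intro α hα h
    have hq : 0 < Real.sin (2 * α) :=
      Real.sin_pos_of_pos_of_lt_pi (by linarith [hα.1]) (by linarith [hα.2, Real.pi_pos])
    have hp : 0 < Real.cos (2 * α) :=
      Real.cos_pos_of_mem_Ioo ⟨by linarith [hα.1, Real.pi_pos], by linarith [hα.2]⟩
    rw [Real.cot_eq_cos_div_sin, Real.tan_eq_sin_div_cos] at h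
    have hE := (div_eq_iff hne).mp h
    have hK : (C 0 0 0 0 - C 0 0 1 1 - 2 * C 0 1 0 1) * (Real.sin (2*α) * Real.cos (2*α))
        = 2 * C 0 0 0 1 * (Real.cos (2*α) ^ 2 - Real.sin (2*α) ^ 2) := by
      rw [hE]; field_simp
    have hpq : Real.cos (2*α) ^ 2 + Real.sin (2*α) ^ 2 = 1 := Real.cos_sq_add_sin_sq _
    intro i j k l
    fin_cases i <;> fin_cases j <;> fin_cases k <;> fin_cases l <;>
      simp only [Ref, Fin.sum_univ_two, Fin.mk_zero, Fin.mk_one, Matrix.of_apply,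
        Matrix.cons_val', Matrix.cons_val_zero, Matrix.cons_val_one, Matrix.head_cons,
        Matrix.empty_val', Matrix.cons_val_fin_one, Matrix.head_fin_const, Fin.isValue] <;>
      simp only [h1111, h0111, h1011, h1101, h1110, h0010, h0100, h1000, h0110,
        h1001, h1010, h1100] <;>
      first
      | linear_combination ((-1:ℝ) * C 0 0 0 0 + (-1:ℝ) * Real.sin (2*α) * Real.sin (2*α) * C 0 0 0 0 + (-1:ℝ) * Real.cos (2*α) * Real.cos (2*α) * C 0 0 0 0) * hpq + ((2:ℝ) * Real.cos (2*α) * Real.sin (2*α)) * hK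
      | linear_combination ((-1:ℝ) * C 0 0 1 1 + (-1:ℝ) * Real.sin (2*α) * Real.sin (2*α) * C 0 0 1 1 + (-1:ℝ) * Real.cos (2*α) * Real.cos (2*α) * C 0 0 1 1) * hpq + ((-2:ℝ) * Real.cos (2*α) * Real.sin (2*α)) * hK
      | linear_combination ((-1:ℝ) * C 0 1 0 1 + (-1:ℝ) * Real.sin (2*α) * Real.sin (2*α) * C 0 1 0 1 + (-1:ℝ) * Real.cos (2*α) * Real.cos (2*α) * C 0 1 0 1) * hpq + ((-2:ℝ) * Real.cos (2*α) * Real.sin (2*α)) * hK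
      | linear_combination ((-1:ℝ) * C 0 0 0 1 + (-3:ℝ) * Real.sin (2*α) * Real.sin (2*α) * C 0 0 0 1 + (2:ℝ) * Real.cos (2*α) * Real.sin (2*α) * C 0 1 0 1 + Real.cos (2*α) * Real.sin (2*α) * C 0 0 1 1 + (-1:ℝ) * Real.cos (2*α) * Real.sin (2*α) * C 0 0 0 0 + Real.cos (2*α) * Real.cos (2*α) * C 0 0 0 1) * hpq + ((-1:ℝ) + (2:ℝ) * Real.sin (2*α) * Real.sin (2*α)) * hK
      | linear_combination (C 0 0 0 1 + (3:ℝ) * Real.sin (2*α) * Real.sin (2*α) * C 0 0 0 1 + (-2:ℝ) * Real.cos (2*α) * Real.sin (2*α) * C 0 1 0 1 + (-1:ℝ) * Real.cos (2*α) * Real.sin (2*α) * C 0 0 1 1 + Real.cos (2*α) * Real.sin (2*α) * C 0 0 0 0 + (-1:ℝ) * Real.cos (2*α) * Real.cos (2*α) * C 0 0 0 1) * hpq + ((1:ℝ) + (-2:ℝ) * Real.sin (2*α) * Real.sin (2*α)) * hK
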